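/- Let S be a finite set, τ a permutation of S, S̃ = {e ∈ S : τ(e) ≠ e} the nontrivial region of τ, t̃ = |S̃|, and τ̃ the restriction of τ to S̃. Let w be a 2×2 matrix of positive reals with w01·w10 < w00·w11. Then the sum, over all pairs of labelings g, h : S̃ → {0,1} with δ(τ̃; g, h) ≤ 0, of Π_{i,j ∈ {0,1}} w_{ij}^{μ(g,h)_{ij}}, is at most ((w00 + w01 + w10 + w11)² − 2·(√(w00·w11) − √(w01·w10))²)^{t̃/2}. -/

import Mathlib

open Finset

/-- Unordered pairs of distinct vertices of `[n]`. -/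
abbrev VPairs (n : ℕ) := {e : Sym2 (Fin n) // ¬ e.IsDiag}

/-- A graph on `[n]`, identified with its edge-indicator function. -/
abbrev LabGraph (n : ℕ) := VPairs n → Bool

/-- The permutation of vertex pairs induced by a permutation of vertices. -/
def pairPerm {n : ℕ} (π : Equiv.Perm (Fin n)) : Equiv.Perm (VPairs n) where
  toFun e := ⟨e.val.map π, fun h => e.prop ((Sym2.isDiag_map π.injective).mp h)⟩
  invFun e := ⟨e.val.map π.symm, fun h => e.prop ((Sym2.isDiag_map π.symm.injective).mp h)⟩
  left_inv e := by
    ext1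
    simp [Sym2.map_map]
  right_inv e := by
    ext1
    simp [Sym2.map_map]

/-- Hamming distance between two labelings. -/
def hamming {S : Type*} [Fintype S] [DecidableEq S] (f g : S → Bool) : ℕ :=
  (Finset.univ.filter fun e => f e ≠ g e).card

/-- `δ(τ; f, g) = (Δ(f∘τ, g) − Δ(f, g))/2`, as a rational number. -/
def deltaQ {S : Type*} [Fintype S] [DecidableEq S] (τ : Equiv.Perm S) (f g : S → Bool) : ℚ :=
  (((hamming (f ∘ τ) g : ℚ)) - (hamming f g : ℚ)) / 2

/-- The entry `(i,j)` of the type `μ(f,g)`. -/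
def typeCount {S : Type*} [Fintype S] [DecidableEq S] (f g : S → Bool) (i j : Bool) : ℕ :=
  (Finset.univ.filter fun e => f e = i ∧ g e = j).card

/-- The joint edge distribution determined by a probability vector. -/
def pv (p11 p10 p01 p00 : ℝ) : Bool → Bool → ℝ :=
  fun a b => if a then (if b then p11 else p10) else (if b then p01 else p00)

open Classical in
/-- The probability of an event under the correlated Erdős–Rényi model `ER(n,p)`. -/
noncomputable def ERprob (n : ℕ) (p : Bool → Bool → ℝ)
    (E : LabGraph n × LabGraph n → Prop) : ℝ :=
  ∑ gab : LabGraph n × LabGraph n,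
    (if E gab then (1 : ℝ) else 0) * ∏ e : VPairs n, p (gab.1 e) (gab.2 e)

open Classical in
/-- The probability of an event under the joint distribution of a uniformly random
permutation `Π` of `[n]` together with `(G_a, G_b) ~ ER(n,p)` independent of it. -/
noncomputable def ERPermProb (n : ℕ) (p : Bool → Bool → ℝ)
    (E : Equiv.Perm (Fin n) → LabGraph n × LabGraph n → Prop) : ℝ :=
  (∑ π : Equiv.Perm (Fin n), ∑ gab : LabGraph n × LabGraph n,
    (if E π gab then (1 : ℝ) else 0) * ∏ e : VPairs n, p (gab.1 e) (gab.2 e))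
    / (Nat.factorial n)

/-- The anonymized graph `G_c`, determined by `G_c(l(Π)(e)) = G_a(e)`. -/
def anonymize {n : ℕ} (π : Equiv.Perm (Fin n)) (ga : LabGraph n) : LabGraph n :=
  fun e => ga ((pairPerm π).symm e)

/-- `S_{n,nt}`: the permutations of `[n]` with exactly `nt` non-fixed points. -/
def Snn (n nt : ℕ) : Finset (Equiv.Perm (Fin n)) :=
  Finset.univ.filter fun π => (Finset.univ.filter fun x => π x ≠ x).card = nt

open Classical in
/-- The generating function `A_{S,τ}(w,z)`; here `z^δ` is expressed as `√z^(2δ)`. -/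
noncomputable def AgF {S : Type*} [Fintype S] (τ : Equiv.Perm S)
    (w : Bool → Bool → ℝ) (z : ℝ) : ℝ :=
  ∑ g : S → Bool, ∑ h : S → Bool,
    (Real.sqrt z) ^ ((hamming (g ∘ τ) h : ℤ) - (hamming g h : ℤ)) *
      ∏ i : Bool, ∏ j : Bool, w i j ^ typeCount g h i j

/-- `a_ℓ(w,z)`: the generating function of a single cycle of length `ℓ`. -/
noncomputable def aGF (ℓ : ℕ) (w : Bool → Bool → ℝ) (z : ℝ) : ℝ :=
  AgF (finRotate ℓ) w z

open Classical in
/-- The number of cycles of length `ℓ` in the cycle decomposition of `τ`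
(the number of points whose `τ`-orbit has size `ℓ`, divided by `ℓ`). -/
noncomputable def cycleCount {S : Type*} [Fintype S] (τ : Equiv.Perm S) (ℓ : ℕ) : ℕ :=
  (Finset.univ.filter fun x : S =>
    (Finset.univ.filter fun y : S => τ.SameCycle x y).card = ℓ).card / ℓ

open Classical in
/-- The probability of an event under an Erdős–Rényi graph `G(n,p)`. -/
noncomputable def ERgraphProb (n : ℕ) (p : ℝ) (E : LabGraph n → Prop) : ℝ :=
  ∑ g : LabGraph n,
    (if E g then (1 : ℝ) else 0) * ∏ e : VPairs n, (if g e then p else 1 - p)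

open Classical in
/-- The number of automorphisms of a graph. -/
noncomputable def autCard {n : ℕ} (g : LabGraph n) : ℕ :=
  (Finset.univ.filter fun π : Equiv.Perm (Fin n) =>
    ∀ e : VPairs n, g (pairPerm π e) = g e).card

/-- The restriction of `τ` to its nontrivial region. -/
def restrictNontrivial {S : Type*} (τ : Equiv.Perm S) : Equiv.Perm {e : S // τ e ≠ e} :=
  τ.subtypePerm (fun x => not_congr (τ.apply_eq_iff_eq))



namespace LTB

/-- Powers of a 2×2 "transfer matrix" `M`, as entry functions. -/
def P (M : Bool → Bool → ℝ) : ℕ → Bool → Bool → ℝ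
  | 0 => fun a b => if a = b then 1 else 0
  | (n+1) => fun a b => ∑ c, M a c * P M n c b

@[simp] lemma P_zero (M : Bool → Bool → ℝ) (a b) :
    P M 0 a b = if a = b then 1 else 0 := rfl

lemma P_succ (M : Bool → Bool → ℝ) (n a b) :
    P M (n+1) a b = ∑ c, M a c * P M n c b := rfl

lemma P_one (M : Bool → Bool → ℝ) (a b) : P M 1 a b = M a b := by
  cases a <;> cases b <;> simp [P, Fintype.sum_bool]

lemma P_succ_right (M : Bool → Bool → ℝ) (n : ℕ) :
    ∀ a b, P M (n+1) a b = ∑ c, P M n a c * M c b := by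
  induction n with
  | zero => intro a b; cases a <;> cases b <;> simp [P, Fintype.sum_bool]
  | succ n ih =>
      intro a b
      rw [P_succ]
      have : ∀ c, P M (n+1) c b = ∑ d, P M n c d * M d b := fun c => ih c b
      simp only [this, P_succ, Finset.sum_mul, Finset.mul_sum]
      rw [Finset.sum_comm]
      apply Finset.sum_congr rfl; intros; apply Finset.sum_congr rfl; intros; ring

lemma P_nonneg (M : Bool → Bool → ℝ) (hM : ∀ a b, 0 ≤ M a b) (n : ℕ) :
    ∀ a b, 0 ≤ P M n a b := by
  induction n with
  | zero => intro a b; simp [P]; positivity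
  | succ n ih =>
      intro a b
      rw [P_succ]
      exact Finset.sum_nonneg fun c _ => mul_nonneg (hM a c) (ih c b)


section Trace

variable (M : Bool → Bool → ℝ)

/-- trace of M -/
noncomputable def trM : ℝ := M false false + M true true
/-- determinant of M -/
noncomputable def detM : ℝ := M false false * M true true - M false true * M true false

lemma CH (c b : Bool) :
    ∑ d, M c d * M d b = trM M * M c b - detM M * (if c = b then 1 else 0) := by
  cases c <;> cases b <;> simp [Fintype.sum_bool, trM, detM] <;> ring

lemma P_add_two (n : ℕ) (a b : Bool) :
    P M (n+2) a b = trM M * P M (n+1) a b - detM M * P M n a b := by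
  have h1 : P M (n+2) a b = ∑ c, P M n a c * (∑ d, M c d * M d b) := by
    rw [show n+2 = (n+1)+1 from rfl, P_succ_right]
    have : ∀ d, P M (n+1) a d = ∑ c, P M n a c * M c d := fun d => P_succ_right M n a d
    simp only [this, Finset.sum_mul, Finset.mul_sum]
    rw [Finset.sum_comm]
    apply Finset.sum_congr rfl; intros; apply Finset.sum_congr rfl; intros; ring
  rw [h1]
  simp only [CH]
  rw [P_succ_right]
  have h2 : ∑ c, P M n a c * (if c = b then 1 else 0) = P M n a b := by
    simp [mul_ite, mul_one, mul_zero]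
  rw [Finset.sum_congr rfl (fun c _ => by ring :
    ∀ c ∈ Finset.univ, P M n a c * (trM M * M c b - detM M * (if c = b then 1 else 0))
      = trM M * (P M n a c * M c b) - detM M * (P M n a c * (if c = b then 1 else 0)))]
  rw [Finset.sum_sub_distrib, ← Finset.mul_sum, ← Finset.mul_sum, h2]

/-- the trace of `M ^ n` -/
noncomputable def trP (n : ℕ) : ℝ := ∑ a, P M n a a

lemma trP_zero : trP M 0 = 2 := by simp [trP, Fintype.sum_bool]

lemma trP_one : trP M 1 = trM M := by simp [trP, P_one, Fintype.sum_bool, trM]; ring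

lemma trP_add_two (n : ℕ) : trP M (n+2) = trM M * trP M (n+1) - detM M * trP M n := by
  simp only [trP, P_add_two, Finset.sum_sub_distrib, Finset.mul_sum]

lemma trP_closed (hM : ∀ a b, 0 < M a b) (hD : 0 ≤ detM M) (n : ℕ) :
    trP M n = ((trM M + Real.sqrt (trM M ^ 2 - 4 * detM M)) / 2) ^ n
      + ((trM M - Real.sqrt (trM M ^ 2 - 4 * detM M)) / 2) ^ n := by
  set T := trM M with hT
  set D := detM M with hDdef
  have hdisc : 0 ≤ T ^ 2 - 4 * D := by
    have h1 := sq_nonneg (M false false - M true true)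
    have h2 := mul_pos (hM false true) (hM true false)
    simp only [hT, hDdef, trM, detM]
    nlinarith
  set r := Real.sqrt (T ^ 2 - 4 * D) with hr
  have hr2 : r ^ 2 = T ^ 2 - 4 * D := Real.sq_sqrt hdisc
  set l1 := (T + r) / 2 with hl1
  set l2 := (T - r) / 2 with hl2
  have hq1 : l1 ^ 2 = T * l1 - D := by
    simp only [hl1]; nlinarith [hr2]
  have hq2 : l2 ^ 2 = T * l2 - D := by
    simp only [hl2]; nlinarith [hr2]
  have key : ∀ m : ℕ, trP M m = l1 ^ m + l2 ^ m ∧ trP M (m+1) = l1 ^ (m+1) + l2 ^ (m+1) := by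
    intro m
    induction m with
    | zero =>
        constructor
        · simp [trP_zero]; norm_num
        · rw [trP_one]; simp only [hl1, hl2]; ring_nf; rfl
    | succ m ih =>
        refine ⟨ih.2, ?_⟩
        rw [trP_add_two, ih.1, ih.2]
        have e1 : l1 ^ (m+2) = T * l1 ^ (m+1) - D * l1 ^ m := by
          have : l1 ^ (m+2) = l1 ^ m * l1 ^ 2 := by ring
          rw [this, hq1]; ring
        have e2 : l2 ^ (m+2) = T * l2 ^ (m+1) - D * l2 ^ m := by
          have : l2 ^ (m+2) = l2 ^ m * l2 ^ 2 := by ring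
          rw [this, hq2]; ring
        rw [e1, e2]; ring
  exact (key n).1

lemma real_add_rpow {x y p : ℝ} (hx : 0 ≤ x) (hy : 0 ≤ y) (hp : 1 ≤ p) :
    x ^ p + y ^ p ≤ (x + y) ^ p := by
  lift x to NNReal using hx
  lift y to NNReal using hy
  have := NNReal.add_rpow_le_rpow_add x y hp
  have h2 : ((x ^ p + y ^ p : NNReal) : ℝ) ≤ (((x + y) ^ p : NNReal) : ℝ) := by
    exact_mod_cast this
  rwa [NNReal.coe_add, NNReal.coe_rpow, NNReal.coe_rpow, NNReal.coe_rpow, NNReal.coe_add] at h2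

/-- The per-cycle bound: `tr(M^ℓ) ≤ (T² - 2D)^{ℓ/2}` for `ℓ ≥ 2`. -/
lemma trP_le (hM : ∀ a b, 0 < M a b) (hD : 0 ≤ detM M) (ℓ : ℕ) (hℓ : 2 ≤ ℓ) :
    trP M ℓ ≤ (trM M ^ 2 - 2 * detM M) ^ ((ℓ : ℝ) / 2) := by
  set T := trM M with hT
  set D := detM M with hDdef
  have hTpos : 0 < T := by
    simp only [hT, trM]; have := hM false false; have := hM true true; linarith
  have hdisc : 0 ≤ T ^ 2 - 4 * D := by
    have h1 := sq_nonneg (M false false - M true true)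
    have h2 := mul_pos (hM false true) (hM true false)
    simp only [hT, hDdef, trM, detM]
    nlinarith
  set r := Real.sqrt (T ^ 2 - 4 * D) with hr
  have hr2 : r ^ 2 = T ^ 2 - 4 * D := Real.sq_sqrt hdisc
  have hrT : r ≤ T := by
    have : r ≤ Real.sqrt (T ^ 2) := Real.sqrt_le_sqrt (by linarith)
    rwa [Real.sqrt_sq hTpos.le] at this
  have hrnn : 0 ≤ r := Real.sqrt_nonneg _
  set l1 := (T + r) / 2 with hl1
  set l2 := (T - r) / 2 with hl2
  have hl1nn : 0 ≤ l1 := by simp only [hl1]; linarith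
  have hl2nn : 0 ≤ l2 := by simp only [hl2]; linarith
  have hsum : l1 ^ 2 + l2 ^ 2 = T ^ 2 - 2 * D := by
    simp only [hl1, hl2]; nlinarith [hr2]
  rw [trP_closed M hM hD, ← hr, ← hl1, ← hl2, ← hsum]
  have hp1 : (1 : ℝ) ≤ (ℓ : ℝ) / 2 := by
    have : (2 : ℝ) ≤ (ℓ : ℝ) := by exact_mod_cast hℓ
    linarith
  have conv : ∀ x : ℝ, 0 ≤ x → x ^ ℓ = (x ^ 2) ^ ((ℓ : ℝ) / 2) := by
    intro x hx
    rw [← Real.rpow_natCast x ℓ, ← Real.rpow_natCast x 2, ← Real.rpow_mul hx]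
    congr 1
    push_cast
    ring
  rw [conv l1 hl1nn, conv l2 hl2nn]
  exact real_add_rpow (sq_nonneg l1) (sq_nonneg l2) hp1

end Trace

section Cycle

/-- Remove a point `y` from a permutation, skipping over it. -/
def skip {S : Type*} [DecidableEq S] (σ : Equiv.Perm S) (y : S) (hy : σ y ≠ y) :
    Equiv.Perm {e : S // e ≠ y} where
  toFun e := if h : σ e.val = y then ⟨σ y, hy⟩ else ⟨σ e.val, h⟩
  invFun e := if h : σ.symm e.val = y then
      ⟨σ.symm y, fun hc => hy (σ.symm.injective (by simp [hc]))⟩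
    else ⟨σ.symm e.val, h⟩
  left_inv e := by
    by_cases h : σ e.val = y
    · dsimp only; rw [dif_pos h]
      have h2 : σ.symm (σ y) = y := by simp
      rw [dif_pos h2]
      ext
      simp [← h]
    · dsimp only; rw [dif_neg h]
      have h2 : σ.symm (σ e.val) = e.val := by simp
      have h3 : ¬ σ.symm (σ e.val) = y := by rw [h2]; exact e.prop
      rw [dif_neg h3]
      ext; simp
  right_inv e := by
    by_cases h : σ.symm e.val = y
    · dsimp only; rw [dif_pos h]
      have h2 : σ (σ.symm y) = y := by simp
      rw [dif_pos h2]
      ext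
      simp [← h]
    · dsimp only; rw [dif_neg h]
      have h2 : σ (σ.symm e.val) = e.val := by simp
      have h3 : ¬ σ (σ.symm e.val) = y := by rw [h2]; exact e.prop
      rw [dif_neg h3]
      ext; simp

lemma skip_apply {S : Type*} [DecidableEq S] (σ : Equiv.Perm S) (y : S) (hy : σ y ≠ y)
    (e : {e : S // e ≠ y}) :
    (skip σ y hy e).val = if σ e.val = y then σ y else σ e.val := by
  simp only [skip, Equiv.coe_fn_mk]
  split_ifs with h <;> rfl

universe u

lemma cycle_sum (M : Bool → Bool → ℝ) (n : ℕ) :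
    ∀ (S : Type u) [Fintype S] [DecidableEq S] (σ : Equiv.Perm S) (x : S),
      Fintype.card S = n + 1 → (∀ y, σ.SameCycle x y) → ∀ k : ℕ,
      (∑ g : S → Bool, P M k (g x) (g (σ x)) * ∏ e ∈ Finset.univ.erase x, M (g e) (g (σ e)))
        = ∑ a, P M (k + n) a a := by
  induction n with
  | zero =>
      intro S _ _ σ x hcard hall k
      haveI : Subsingleton S := Fintype.card_le_one_iff_subsingleton.mp (by omega)
      have hσx : σ x = x := Subsingleton.elim _ _
      have huniv : (Finset.univ.erase x) = ∅ := by
        ext e; simp [Subsingleton.elim e x]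
      rw [huniv]
      simp only [Finset.prod_empty, mul_one, hσx, Nat.add_zero]
      apply Fintype.sum_bijective (fun g : S → Bool => g x)
      · constructor
        · intro g1 g2 h; funext e; rw [Subsingleton.elim e x]; exact h
        · intro a; exact ⟨fun _ => a, rfl⟩
      · intro g; rfl
  | succ n ih =>
      intro S _ _ σ x hcard hall k
      have h2card : 1 < Fintype.card S := by omega
      have hfp : ∀ z : S, σ z ≠ z := by
        intro z hz
        obtain ⟨u, v, huv⟩ := Fintype.one_lt_card_iff.mp h2card
        have hone : ∀ w : S, w = z := by
          intro w
          obtain ⟨i, hi⟩ := (hall z).symm.trans (hall w)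
          rw [Equiv.Perm.zpow_apply_eq_self_of_apply_eq_self hz] at hi
          exact hi.symm
        exact huv ((hone u).trans (hone v).symm)
      set y := σ x with hy
      have hyx : y ≠ x := hfp x
      have hσy : σ y ≠ y := hfp y
      set σ' := skip σ y hσy with hσ'def
      set x' : {e : S // e ≠ y} := ⟨x, fun h => hyx h.symm⟩ with hx'def
      have hσ'x' : σ' x' = ⟨σ y, hσy⟩ := by
        apply Subtype.ext
        rw [skip_apply]
        rw [if_pos (hy.symm : σ x'.val = y)]
      -- cardinality of the subtype
      have hcard' : Fintype.card {e : S // e ≠ y} = n + 1 := by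
        have h1 : Fintype.card {e : S // e ≠ y} = Fintype.card S - 1 := by
          rw [Fintype.card_subtype_compl, Fintype.card_subtype_eq]
        omega
      -- the skipped permutation is still a full cycle
      have claim : ∀ m : ℕ, (σ ^ m) x ≠ y → ∃ j : ℕ, (((σ') ^ j) x').val = (σ ^ m) x := by
        intro m
        induction m with
        | zero => intro _; exact ⟨0, by simp [hx'def]⟩
        | succ m ihm =>
            intro hne
            have hstep : (σ ^ (m+1)) x = σ ((σ ^ m) x) := by
              rw [pow_succ']; rfl
            by_cases hm : (σ ^ m) x = y
            · refine ⟨1, ?_⟩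
              rw [pow_one, skip_apply]
              rw [hstep, hm]
              have hcond : σ (x'.val) = y := hy.symm
              simp [hcond]
            · obtain ⟨j, hj⟩ := ihm hm
              refine ⟨j + 1, ?_⟩
              have : (σ' ^ (j+1)) x' = σ' ((σ' ^ j) x') := by rw [pow_succ']; rfl
              rw [this, skip_apply, hj, hstep]
              rw [if_neg (by rw [← hstep]; exact hne)]
      have hall' : ∀ z : {e : S // e ≠ y}, σ'.SameCycle x' z := by
        intro z
        obtain ⟨i, _, hi⟩ := (hall z.val).exists_pow_eq'
        obtain ⟨j, hj⟩ := claim i (by rw [hi]; exact z.prop)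
        exact ⟨(j : ℤ), by rw [zpow_natCast]; exact Subtype.ext (by rw [hj, hi])⟩
      -- the sum manipulation
      have hymem : y ∈ Finset.univ.erase x := by simp [hyx]
      have key : (∑ g : S → Bool,
            P M k (g x) (g y) * ∏ e ∈ Finset.univ.erase x, M (g e) (g (σ e)))
          = ∑ g' : {e : S // e ≠ y} → Bool,
              P M (k+1) (g' x') (g' (σ' x')) *
                ∏ e' ∈ Finset.univ.erase x', M (g' e') (g' (σ' e')) := by
        have hsc := Equiv.sum_comp (Equiv.funSplitAt y Bool).symm
          (fun g : S → Bool => P M k (g x) (g y) * ∏ e ∈ Finset.univ.erase x, M (g e) (g (σ e)))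
        rw [← hsc, Fintype.sum_prod_type, Finset.sum_comm]
        apply Finset.sum_congr rfl
        intro g' _
        have hGy : ∀ b : Bool, (Equiv.funSplitAt y Bool).symm (b, g') y = b := by
          intro b; simp [Equiv.funSplitAt, Equiv.piSplitAt]
        have hGne : ∀ (b : Bool) (e : S) (he : e ≠ y),
            (Equiv.funSplitAt y Bool).symm (b, g') e = g' ⟨e, he⟩ := by
          intro b e he; simp [Equiv.funSplitAt, Equiv.piSplitAt, he]
        have hprodeq : ∀ b : Bool,
            ∏ e ∈ (Finset.univ.erase x).erase y,
                M ((Equiv.funSplitAt y Bool).symm (b, g') e)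
                  ((Equiv.funSplitAt y Bool).symm (b, g') (σ e))
            = ∏ e' ∈ Finset.univ.erase x', M (g' e') (g' (σ' e')) := by
          intro b
          refine Finset.prod_bij'
            (fun (e : S) (he : e ∈ (Finset.univ.erase x).erase y) =>
              (⟨e, (Finset.mem_erase.mp he).1⟩ : {e : S // e ≠ y}))
            (fun (e' : {e : S // e ≠ y}) (_ : e' ∈ Finset.univ.erase x') => e'.val)
            ?_ ?_ ?_ ?_ ?_
          · intro e he
            have hex : e ≠ x := (Finset.mem_erase.mp (Finset.mem_erase.mp he).2).1
            simp only [Finset.mem_erase, Finset.mem_univ, and_true]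
            exact fun hc => hex (congrArg Subtype.val hc)
          · intro e' he'
            have hex : e' ≠ x' := (Finset.mem_erase.mp he').1
            simp only [Finset.mem_erase, Finset.mem_univ, and_true]
            exact ⟨e'.prop, fun hc => hex (Subtype.ext hc)⟩
          · intro e he; rfl
          · intro e' he'; rfl
          · intro e he
            have hey : e ≠ y := (Finset.mem_erase.mp he).1
            have hex : e ≠ x := (Finset.mem_erase.mp (Finset.mem_erase.mp he).2).1
            have hσey : σ e ≠ y := by
              intro hc
              exact hex (σ.injective (by rw [hc, ← hy]))
            rw [hGne b e hey, hGne b (σ e) hσey]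
            congr 1
            congr 1
            apply Subtype.ext
            rw [skip_apply, if_neg hσey]
        have hterm : ∀ b : Bool,
            P M k ((Equiv.funSplitAt y Bool).symm (b, g') x)
                ((Equiv.funSplitAt y Bool).symm (b, g') y) *
              ∏ e ∈ Finset.univ.erase x,
                M ((Equiv.funSplitAt y Bool).symm (b, g') e)
                  ((Equiv.funSplitAt y Bool).symm (b, g') (σ e))
            = P M k (g' x') b * (M b (g' (σ' x')) *
                ∏ e' ∈ Finset.univ.erase x', M (g' e') (g' (σ' e'))) := by
          intro b
          rw [← Finset.mul_prod_erase _ _ hymem]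
          have h1 : (Equiv.funSplitAt y Bool).symm (b, g') x = g' x' :=
            hGne b x (fun h => hyx h.symm)
          have h2 : (Equiv.funSplitAt y Bool).symm (b, g') (σ y) = g' (σ' x') := by
            rw [hGne b (σ y) hσy]
            congr 1
            exact hσ'x'.symm
          rw [h1, hGy, h2, hprodeq]
        simp only [hterm, ← mul_assoc]
        rw [← Finset.sum_mul, P_succ_right]
      rw [key, ih _ σ' x' hcard' hall' (k+1)]
      have : k + 1 + n = k + (n + 1) := by omega
      rw [this]

/-- Splitting functions on `S` according to a predicate. -/
def mergeEquiv (S : Type u) (p : S → Prop) [DecidablePred p] :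
    (({e // p e} → Bool) × ({e // ¬ p e} → Bool)) ≃ (S → Bool) where
  toFun gp e := if h : p e then gp.1 ⟨e, h⟩ else gp.2 ⟨e, h⟩
  invFun g := (fun e => g e.val, fun e => g e.val)
  left_inv gp := by
    refine Prod.ext ?_ ?_
    · funext e; dsimp only; rw [dif_pos e.prop]
    · funext e; dsimp only; rw [dif_neg e.prop]
  right_inv g := by
    funext e
    by_cases h : p e
    · dsimp only; rw [dif_pos h]
    · dsimp only; rw [dif_neg h]

lemma master (M : Bool → Bool → ℝ) (hM : ∀ a b, 0 < M a b) (B : ℝ) (hB : 0 < B)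
    (hcyc : ∀ ℓ : ℕ, 2 ≤ ℓ → (∑ a, P M ℓ a a) ≤ B ^ ((ℓ : ℝ) / 2)) (n : ℕ) :
    ∀ (S : Type u) [Fintype S] [DecidableEq S] (σ : Equiv.Perm S),
      Fintype.card S = n → (∀ z, σ z ≠ z) →
      (∑ g : S → Bool, ∏ e, M (g e) (g (σ e))) ≤ B ^ ((n : ℝ) / 2) := by
  induction n using Nat.strong_induction_on with
  | _ n ihn =>
  intro S _ _ σ hcard hfp
  rcases Nat.eq_zero_or_pos n with h0 | hpos
  · subst h0
    haveI : IsEmpty S := Fintype.card_eq_zero_iff.mp hcard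
    haveI : Unique (S → Bool) := Pi.uniqueOfIsEmpty _
    rw [Fintype.sum_unique]
    simp [Finset.univ_eq_empty]
  · have hne : Nonempty S := Fintype.card_pos_iff.mp (by omega)
    obtain ⟨x⟩ := hne
    classical
    set p : S → Prop := fun e => σ.SameCycle x e with hp
    have hpres : ∀ e, p e ↔ p (σ e) := fun e =>
      (Equiv.Perm.sameCycle_apply_right (f := σ) (x := x) (y := e)).symm
    have hnpres : ∀ e, ¬ p e ↔ ¬ p (σ e) := fun e => not_congr (hpres e)
    set σZ := σ.subtypePerm (fun e => (hpres e).symm) with hσZ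
    set σC := σ.subtypePerm (p := fun e => ¬ p e) (fun e => (hnpres e).symm) with hσC
    -- split the sum
    have hG : ∀ (g1 : {e // p e} → Bool) (g2 : {e // ¬ p e} → Bool),
        (∏ e, M ((mergeEquiv S p) (g1, g2) e) ((mergeEquiv S p) (g1, g2) (σ e)))
        = (∏ e : {e // p e}, M (g1 e) (g1 (σZ e)))
          * ∏ e : {e // ¬ p e}, M (g2 e) (g2 (σC e)) := by
      intro g1 g2
      rw [← Fintype.prod_subtype_mul_prod_subtype p
        (fun e => M ((mergeEquiv S p) (g1, g2) e) ((mergeEquiv S p) (g1, g2) (σ e)))]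
      congr 1
      · apply Finset.prod_congr rfl
        intro e _
        have he1 : (mergeEquiv S p) (g1, g2) e.val = g1 e := by
          show (if h : p e.val then _ else _) = _
          rw [dif_pos e.prop]
        have he2 : (mergeEquiv S p) (g1, g2) (σ e.val) = g1 (σZ e) := by
          show (if h : p (σ e.val) then _ else _) = _
          rw [dif_pos ((hpres e.val).mp e.prop)]
          rfl
        rw [he1, he2]
      · apply Finset.prod_congr rfl
        intro e _
        have he1 : (mergeEquiv S p) (g1, g2) e.val = g2 e := by
          show (if h : p e.val then _ else _) = _
          rw [dif_neg e.prop]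
        have he2 : (mergeEquiv S p) (g1, g2) (σ e.val) = g2 (σC e) := by
          show (if h : p (σ e.val) then _ else _) = _
          rw [dif_neg ((hnpres e.val).mp e.prop)]
          rfl
        rw [he1, he2]
    have hsplit : (∑ g : S → Bool, ∏ e, M (g e) (g (σ e)))
        = (∑ g1 : {e // p e} → Bool, ∏ e, M (g1 e) (g1 (σZ e)))
          * (∑ g2 : {e // ¬ p e} → Bool, ∏ e, M (g2 e) (g2 (σC e))) := by
      rw [← Equiv.sum_comp (mergeEquiv S p) (fun g : S → Bool => ∏ e, M (g e) (g (σ e))),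
        Fintype.sum_prod_type, Finset.sum_mul_sum]
      apply Finset.sum_congr rfl
      intro g1 _
      apply Finset.sum_congr rfl
      intro g2 _
      exact hG g1 g2
    -- the orbit of x
    set xZ : {e // p e} := ⟨x, Equiv.Perm.SameCycle.refl σ x⟩ with hxZ
    set ℓ := Fintype.card {e // p e} with hℓ
    have hallZ : ∀ z : {e // p e}, σZ.SameCycle xZ z := by
      intro z
      obtain ⟨i, _, hi⟩ := (z.prop).exists_pow_eq'
      refine ⟨(i : ℤ), ?_⟩
      rw [zpow_natCast, hσZ, Equiv.Perm.subtypePerm_pow]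
      exact Subtype.ext hi
    have hxZ2 : (⟨σ x, (hpres x).mp (Equiv.Perm.SameCycle.refl σ x)⟩ : {e // p e}) ≠ xZ :=
      fun hc => hfp x (congrArg Subtype.val hc)
    have hℓ2 : 2 ≤ ℓ := Fintype.one_lt_card_iff.mpr ⟨_, _, hxZ2⟩
    have horb : (∑ g1 : {e // p e} → Bool, ∏ e, M (g1 e) (g1 (σZ e)))
        = ∑ a, P M ℓ a a := by
      have hc : Fintype.card {e // p e} = (ℓ - 1) + 1 := by omega
      have hcs := cycle_sum M (ℓ - 1) {e // p e} σZ xZ hc hallZ 1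
      have hstep : ∀ g1 : {e // p e} → Bool,
          (∏ e, M (g1 e) (g1 (σZ e)))
          = P M 1 (g1 xZ) (g1 (σZ xZ)) * ∏ e ∈ Finset.univ.erase xZ, M (g1 e) (g1 (σZ e)) := by
        intro g1
        rw [P_one]
        exact (Finset.mul_prod_erase _ _ (Finset.mem_univ xZ)).symm
      simp only [hstep]
      rw [hcs]
      have : 1 + (ℓ - 1) = ℓ := by omega
      rw [this]
    -- cardinalities
    have hcompl : Fintype.card {e // ¬ p e} = n - ℓ := by
      rw [Fintype.card_subtype_compl, hcard]
    have hle : ℓ ≤ n := by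
      rw [← hcard, hℓ]
      exact Fintype.card_subtype_le _
    set m := Fintype.card {e // ¬ p e} with hm
    have hfpC : ∀ z : {e // ¬ p e}, σC z ≠ z := by
      intro z hc
      exact hfp z.val (congrArg Subtype.val hc)
    have hCle : (∑ g2 : {e // ¬ p e} → Bool, ∏ e, M (g2 e) (g2 (σC e)))
        ≤ B ^ ((m : ℝ) / 2) :=
      ihn m (by omega) _ σC rfl hfpC
    have hZle : (∑ g1 : {e // p e} → Bool, ∏ e, M (g1 e) (g1 (σZ e)))
        ≤ B ^ ((ℓ : ℝ) / 2) := by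
      rw [horb]
      exact hcyc ℓ hℓ2
    have hCnn : (0:ℝ) ≤ ∑ g2 : {e // ¬ p e} → Bool, ∏ e, M (g2 e) (g2 (σC e)) :=
      Finset.sum_nonneg fun g _ => Finset.prod_nonneg fun e _ => (hM _ _).le
    calc (∑ g : S → Bool, ∏ e, M (g e) (g (σ e)))
        = _ * _ := hsplit
      _ ≤ B ^ ((ℓ : ℝ) / 2) * B ^ ((m : ℝ) / 2) :=
          mul_le_mul hZle hCle hCnn (Real.rpow_nonneg hB.le _)
      _ = B ^ ((n : ℝ) / 2) := by
          rw [← Real.rpow_add hB, ← add_div]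
          congr 1
          congr 1
          have : ℓ + m = n := by omega
          exact_mod_cast this

end Cycle

end LTB

namespace LTB

lemma typeProd {E : Type*} [Fintype E] [DecidableEq E] (w : Bool → Bool → ℝ)
    (g h : E → Bool) :
    (∏ i : Bool, ∏ j : Bool, w i j ^ typeCount g h i j) = ∏ e, w (g e) (h e) := by
  classical
  rw [← Fintype.prod_prod_type']
  rw [← Finset.prod_fiberwise_of_maps_to (g := fun e => (g e, h e))
    (t := (Finset.univ : Finset (Bool × Bool)))
    (fun e _ => Finset.mem_univ ((g e, h e))) (fun e => w (g e) (h e))]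
  apply Finset.prod_congr rfl
  intro pr _
  have hconst : ∀ e ∈ Finset.univ.filter (fun e => (g e, h e) = pr),
      w (g e) (h e) = w pr.1 pr.2 := by
    intro e he
    obtain ⟨-, he2⟩ := Finset.mem_filter.mp he
    rw [← he2]
  rw [Finset.prod_congr rfl hconst, Finset.prod_const]
  congr 1
  unfold typeCount
  congr 1
  apply Finset.filter_congr
  intro e _
  simp [Prod.ext_iff]

lemma sum_prod_fun {ι : Type*} [Fintype ι] [DecidableEq ι] (f : ι → Bool → ℝ) :
    ∑ h : ι → Bool, ∏ i, f i (h i) = ∏ i, ∑ c, f i c := by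
  classical
  rw [Finset.prod_univ_sum, Fintype.piFinset_univ]

lemma pow_hamming {E : Type*} [Fintype E] [DecidableEq E] (s : ℝ) (f h : E → Bool) :
    s ^ hamming f h = ∏ e, s ^ (if f e ≠ h e then 1 else 0) := by
  rw [Finset.prod_pow_eq_pow_sum]
  congr 1
  rw [hamming, Finset.card_filter]

end LTB

open Classical in
/-- the lower-tail generating-function bound (Theorem 5). -/
theorem lower_tail_bound {S : Type*} [Fintype S] [DecidableEq S] (τ : Equiv.Perm S)
    (w : Bool → Bool → ℝ) (hw : ∀ i j, 0 < w i j)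
    (hcorr : w false true * w true false < w false false * w true true) :
    ∑ gh ∈ (Finset.univ.filter
        fun gh : ({e : S // τ e ≠ e} → Bool) × ({e : S // τ e ≠ e} → Bool) =>
          deltaQ (restrictNontrivial τ) gh.1 gh.2 ≤ 0),
      ∏ i : Bool, ∏ j : Bool, w i j ^ typeCount gh.1 gh.2 i j
    ≤ ((w false false + w false true + w true false + w true true) ^ 2
        - 2 * (Real.sqrt (w false false * w true true)
            - Real.sqrt (w false true * w true false)) ^ 2)
      ^ ((Fintype.card {e : S // τ e ≠ e} : ℝ) / 2) := by
  classical
  set σ := restrictNontrivial τ with hσdef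
  have hfpσ : ∀ z : {e : S // τ e ≠ e}, σ z ≠ z := by
    intro z hc
    exact z.prop (congrArg Subtype.val hc)
  set p := Real.sqrt (w false false * w true true) with hpdef
  set q := Real.sqrt (w false true * w true false) with hqdef
  have hppos : 0 < p := Real.sqrt_pos.mpr (mul_pos (hw _ _) (hw _ _))
  have hqpos : 0 < q := Real.sqrt_pos.mpr (mul_pos (hw _ _) (hw _ _))
  have hp2 : p ^ 2 = w false false * w true true :=
    Real.sq_sqrt (mul_pos (hw _ _) (hw _ _)).le
  have hq2 : q ^ 2 = w false true * w true false :=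
    Real.sq_sqrt (mul_pos (hw _ _) (hw _ _)).le
  have hqp : q < p := Real.sqrt_lt_sqrt (mul_pos (hw _ _) (hw _ _)).le hcorr
  set s := Real.sqrt (q / p) with hsdef
  have hspos : 0 < s := Real.sqrt_pos.mpr (div_pos hqpos hppos)
  have hs0 : s ≠ 0 := ne_of_gt hspos
  have hs2 : s ^ 2 = q / p := Real.sq_sqrt (div_pos hqpos hppos).le
  have hs1 : s < 1 := by
    nlinarith [hspos, hs2, (div_lt_one hppos).mpr hqp]
  set M : Bool → Bool → ℝ := fun a b =>
    ∑ c, s ^ (if b ≠ c then 1 else 0) / s ^ (if a ≠ c then 1 else 0) * w a c with hMdef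
  have hMpos : ∀ a b, 0 < M a b := by
    intro a b
    apply Finset.sum_pos _ ⟨false, Finset.mem_univ _⟩
    intro c _
    have := hw a c
    positivity
  have hM00 : M false false = w false true + w false false := by
    simp [hMdef, Fintype.sum_bool, div_self hs0]
  have hM11 : M true true = w true true + w true false := by
    simp [hMdef, Fintype.sum_bool, div_self hs0]
  have hM01 : M false true = w false true / s + s * w false false := by
    simp [hMdef, Fintype.sum_bool]
    ring
  have hM10 : M true false = s * w true true + w true false / s := by
    simp [hMdef, Fintype.sum_bool]
    ring
  have hdet : LTB.detM M = (p - q) ^ 2 := by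
    rw [LTB.detM, hM00, hM11, hM01, hM10]
    have expand : (w false true + w false false) * (w true true + w true false)
        - (w false true / s + s * w false false) * (s * w true true + w true false / s)
        = (w false false * w true true) + (w false true * w true false)
          - (w false true * w true false) / s ^ 2
          - s ^ 2 * (w false false * w true true) := by
      field_simp
      ring
    rw [expand, ← hp2, ← hq2]
    rw [hs2]
    field_simp
    ring
  have hdetnn : 0 ≤ LTB.detM M := by rw [hdet]; positivity
  have htr : LTB.trM M = w false true + w false false + (w true true + w true false) := by
    rw [LTB.trM, hM00, hM11]
  have hBpos : 0 < LTB.trM M ^ 2 - 2 * LTB.detM M := by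
    have h1 := hMpos false false
    have h2 := hMpos true true
    have h3 := mul_pos (hMpos false true) (hMpos true false)
    rw [LTB.trM, LTB.detM]
    nlinarith
  have hcyc : ∀ ℓ : ℕ, 2 ≤ ℓ →
      (∑ a, LTB.P M ℓ a a) ≤ (LTB.trM M ^ 2 - 2 * LTB.detM M) ^ ((ℓ : ℝ) / 2) := by
    intro ℓ hℓ
    have := LTB.trP_le M hMpos hdetnn ℓ hℓ
    rwa [LTB.trP] at this
  have hmaster := LTB.master M hMpos _ hBpos hcyc
    (Fintype.card {e : S // τ e ≠ e}) {e : S // τ e ≠ e} σ rfl hfpσ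
  -- the chain of inequalities
  have hsum1 : ∑ gh ∈ (Finset.univ.filter
        fun gh : ({e : S // τ e ≠ e} → Bool) × ({e : S // τ e ≠ e} → Bool) =>
          deltaQ σ gh.1 gh.2 ≤ 0),
      (∏ i : Bool, ∏ j : Bool, w i j ^ typeCount gh.1 gh.2 i j)
      ≤ ∑ gh ∈ (Finset.univ.filter
        fun gh : ({e : S // τ e ≠ e} → Bool) × ({e : S // τ e ≠ e} → Bool) =>
          deltaQ σ gh.1 gh.2 ≤ 0),
        (s ^ hamming (gh.1 ∘ σ) gh.2 / s ^ hamming gh.1 gh.2) *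
          ∏ i : Bool, ∏ j : Bool, w i j ^ typeCount gh.1 gh.2 i j := by
    apply Finset.sum_le_sum
    intro gh hgh
    have hδ := (Finset.mem_filter.mp hgh).2
    have hDD : hamming (gh.1 ∘ σ) gh.2 ≤ hamming gh.1 gh.2 := by
      unfold deltaQ at hδ
      have h2 : ((hamming (gh.1 ∘ σ) gh.2 : ℚ)) ≤ (hamming gh.1 gh.2 : ℚ) := by linarith
      exact_mod_cast h2
    have hratio : 1 ≤ s ^ hamming (gh.1 ∘ σ) gh.2 / s ^ hamming gh.1 gh.2 := by
      rw [one_le_div (pow_pos hspos _)]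
      exact pow_le_pow_of_le_one hspos.le hs1.le hDD
    have hnn : 0 ≤ ∏ i : Bool, ∏ j : Bool, w i j ^ typeCount gh.1 gh.2 i j :=
      Finset.prod_nonneg fun i _ => Finset.prod_nonneg fun j _ =>
        pow_nonneg (hw i j).le _
    exact le_mul_of_one_le_left hnn hratio
  have hsum2 : ∑ gh ∈ (Finset.univ.filter
        fun gh : ({e : S // τ e ≠ e} → Bool) × ({e : S // τ e ≠ e} → Bool) =>
          deltaQ σ gh.1 gh.2 ≤ 0),
        (s ^ hamming (gh.1 ∘ σ) gh.2 / s ^ hamming gh.1 gh.2) *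
          ∏ i : Bool, ∏ j : Bool, w i j ^ typeCount gh.1 gh.2 i j
      ≤ ∑ gh : ({e : S // τ e ≠ e} → Bool) × ({e : S // τ e ≠ e} → Bool),
        (s ^ hamming (gh.1 ∘ σ) gh.2 / s ^ hamming gh.1 gh.2) *
          ∏ i : Bool, ∏ j : Bool, w i j ^ typeCount gh.1 gh.2 i j := by
    apply Finset.sum_le_sum_of_subset_of_nonneg (Finset.filter_subset _ _)
    intro gh _ _
    have hnn : 0 ≤ ∏ i : Bool, ∏ j : Bool, w i j ^ typeCount gh.1 gh.2 i j :=
      Finset.prod_nonneg fun i _ => Finset.prod_nonneg fun j _ =>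
        pow_nonneg (hw i j).le _
    positivity
  have hsum3 : ∑ gh : ({e : S // τ e ≠ e} → Bool) × ({e : S // τ e ≠ e} → Bool),
        (s ^ hamming (gh.1 ∘ σ) gh.2 / s ^ hamming gh.1 gh.2) *
          ∏ i : Bool, ∏ j : Bool, w i j ^ typeCount gh.1 gh.2 i j
      = ∑ g : {e : S // τ e ≠ e} → Bool, ∏ e, M (g e) (g (σ e)) := by
    rw [Fintype.sum_prod_type]
    apply Finset.sum_congr rfl
    intro g _
    have hterm : ∀ h : {e : S // τ e ≠ e} → Bool,
        (s ^ hamming (g ∘ σ) h / s ^ hamming g h) *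
          ∏ i : Bool, ∏ j : Bool, w i j ^ typeCount g h i j
        = ∏ e, (s ^ (if g (σ e) ≠ h e then 1 else 0)
            / s ^ (if g e ≠ h e then 1 else 0) * w (g e) (h e)) := by
      intro h
      rw [LTB.pow_hamming s (g ∘ σ) h, LTB.pow_hamming s g h, LTB.typeProd w g h,
        ← Finset.prod_div_distrib, ← Finset.prod_mul_distrib]
      apply Finset.prod_congr rfl
      intro e _
      rfl
    simp only [hterm]
    rw [LTB.sum_prod_fun (fun e c =>
      s ^ (if g (σ e) ≠ c then 1 else 0) / s ^ (if g e ≠ c then 1 else 0) * w (g e) c)]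
  rw [hsum3] at hsum2
  have hfinal : (LTB.trM M ^ 2 - 2 * LTB.detM M) ^ ((Fintype.card {e : S // τ e ≠ e} : ℝ) / 2)
      = ((w false false + w false true + w true false + w true true) ^ 2
        - 2 * (p - q) ^ 2) ^ ((Fintype.card {e : S // τ e ≠ e} : ℝ) / 2) := by
    rw [htr, hdet]
    ring_nf
  calc ∑ gh ∈ (Finset.univ.filter
        fun gh : ({e : S // τ e ≠ e} → Bool) × ({e : S // τ e ≠ e} → Bool) =>
          deltaQ σ gh.1 gh.2 ≤ 0),
      (∏ i : Bool, ∏ j : Bool, w i j ^ typeCount gh.1 gh.2 i j)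
      ≤ _ := hsum1
    _ ≤ ∑ g : {e : S // τ e ≠ e} → Bool, ∏ e, M (g e) (g (σ e)) := hsum2
    _ ≤ (LTB.trM M ^ 2 - 2 * LTB.detM M) ^ ((Fintype.card {e : S // τ e ≠ e} : ℝ) / 2) :=
        hmaster
    _ = _ := by rw [hfinal]
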